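/- Hardy-type form bound: for every α > 8/9 there exists B ∈ ℝ such that for every g in the Sobolev space W^{1,2}(0,2π) with g(0)=g(2π)=0, one has ∫₀^{2π} V(θ)|g(θ)|² dθ ≤ α ∫₀^{2π} |g'(θ)|² dθ + B ∫₀^{2π} |g(θ)|² dθ, where V(θ) = 1/12 + (1/18)·cot²(θ/2). -/

import Mathlib

open Real Set MeasureTheory intervalIntegral Filter Topology

lemma myHasDerivAt_cot {x : ℝ} (hx : Real.sin x ≠ 0) :
    HasDerivAt Real.cot (-(1 / Real.sin x ^ 2)) x := by
  have h := (Real.hasDerivAt_cos x).div (Real.hasDerivAt_sin x) hx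
  have he : (Real.cos / Real.sin) = Real.cot := by
    funext y; exact (Real.cot_eq_cos_div_sin y).symm
  rw [he] at h
  refine h.congr_deriv ?_
  have hs := Real.sin_sq_add_cos_sq x
  field_simp
  nlinarith [hs]

lemma sq_integral_le {f : ℝ → ℝ} {a b : ℝ} (hab : a ≤ b)
    (h1 : IntervalIntegrable f volume a b)
    (h2 : IntervalIntegrable (fun t => f t ^ 2) volume a b) :
    (∫ t in a..b, f t) ^ 2 ≤ (b - a) * ∫ t in a..b, f t ^ 2 := by
  rcases eq_or_lt_of_le hab with rfl | hab'
  · simp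
  set Jv := ∫ t in a..b, f t with hI
  set c : ℝ := Jv / (b - a) with hc
  have h3 : (0:ℝ) ≤ ∫ t in a..b, (f t - c) ^ 2 :=
    intervalIntegral.integral_nonneg hab (fun u _ => sq_nonneg _)
  have hexp : ∀ t ∈ uIcc a b, (fun t => (f t - c) ^ 2) t
      = (fun t => f t ^ 2 - (2*c) * f t + c^2) t := by intro t _; ring
  rw [intervalIntegral.integral_congr hexp] at h3
  rw [intervalIntegral.integral_add ((h2.sub (h1.const_mul (2*c)))) intervalIntegrable_const,
    intervalIntegral.integral_sub h2 (h1.const_mul (2*c)),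
    intervalIntegral.integral_const_mul, intervalIntegral.integral_const] at h3
  rw [← hI, smul_eq_mul] at h3
  have hba : 0 < b - a := by linarith
  have h5 : (b-a) * (Jv / (b-a))^2 = Jv^2/(b-a) := by field_simp
  have h4 : 2 * (Jv / (b - a)) * Jv = 2 * (Jv^2 / (b-a)) := by field_simp
  rw [h5, h4] at h3
  have h6 : Jv^2/(b-a) ≤ ∫ (t : ℝ) in a..b, f t ^ 2 := by linarith
  calc Jv^2 = (b-a) * (Jv^2/(b-a)) := by field_simp
    _ ≤ (b - a) * ∫ (t : ℝ) in a..b, f t ^ 2 := by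
        exact mul_le_mul_of_nonneg_left h6 (le_of_lt hba)

lemma cot_le_inv {x : ℝ} (h1 : 0 < x) (h2 : x < π/2) : Real.cot x ≤ 1/x := by
  have hs : 0 < Real.sin x := Real.sin_pos_of_pos_of_lt_pi h1 (by linarith [Real.pi_pos])
  have hc : 0 < Real.cos x := Real.cos_pos_of_mem_Ioo ⟨by linarith, h2⟩
  have ht := Real.lt_tan h1 h2
  rw [Real.tan_eq_sin_div_cos] at ht
  rw [Real.cot_eq_cos_div_sin]
  rw [div_le_div_iff₀ hs h1]
  have : x * Real.cos x < Real.sin x := by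
    rw [lt_div_iff₀ hc] at ht; linarith
  linarith

lemma cot_nonneg' {x : ℝ} (h1 : 0 < x) (h2 : x ≤ π/2) : 0 ≤ Real.cot x := by
  have hs : 0 < Real.sin x := Real.sin_pos_of_pos_of_lt_pi h1 (by linarith [Real.pi_pos])
  have hc : 0 ≤ Real.cos x := Real.cos_nonneg_of_mem_Icc ⟨by linarith [Real.pi_pos], h2⟩
  rw [Real.cot_eq_cos_div_sin]
  positivity

lemma cot_pi_sub (x : ℝ) : Real.cot (π - x) = - Real.cot x := by
  rw [Real.cot_eq_cos_div_sin, Real.cot_eq_cos_div_sin, Real.cos_pi_sub, Real.sin_pi_sub]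
  ring

lemma interval_step (g g' : ℝ → ℝ) (a b : ℝ) (ha : 0 < a) (hb : b < 2*π) (hab : a ≤ b)
    (hg : ContinuousOn g (Icc 0 (2*π)))
    (hderiv : ∀ θ ∈ Ioo 0 (2*π), HasDerivAt g (g' θ) θ)
    (hg'm : AEStronglyMeasurable g' (volume.restrict (Set.Ioc a b)))
    (hg'2 : IntervalIntegrable (fun θ => g' θ^2) volume 0 (2*π))
    (hFg2 : IntervalIntegrable (fun θ => (1/8 + (1/16)*Real.cot (θ/2)^2) * g θ^2) volume 0 (2*π)) :
    (∫ θ in a..b, (1/8 + (1/16)*Real.cot (θ/2)^2) * g θ^2)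
      ≤ (∫ θ in a..b, g' θ^2) + (1/4)*Real.cot (a/2)*(g a)^2 - (1/4)*Real.cot (b/2)*(g b)^2 := by
  have hπ : (0:ℝ) < π := Real.pi_pos
  -- sin (θ/2) > 0 on [a,b]
  have hsin : ∀ θ ∈ Icc a b, 0 < Real.sin (θ/2) := by
    intro θ hθ
    exact Real.sin_pos_of_pos_of_lt_pi (by linarith [hθ.1]) (by linarith [hθ.2])
  -- w and h
  set w : ℝ → ℝ := fun θ => (1/4) * (Real.cos (θ/2) / Real.sin (θ/2)) with hw
  set h : ℝ → ℝ := fun θ => w θ * g θ ^ 2 with hh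
  set h' : ℝ → ℝ := fun θ =>
      (-(1/8) * (1/Real.sin (θ/2)^2)) * g θ ^ 2 + w θ * (2 * g θ ^ 1 * g' θ) with hh'
  have hIab : Icc a b ⊆ Ioo 0 (2*π) := fun θ hθ => ⟨by linarith [hθ.1], by linarith [hθ.2]⟩
  -- derivative of h on Ioo a b
  have hd : ∀ x ∈ Ioo a b, HasDerivAt h (h' x) x := by
    intro x hx
    have hx' : x ∈ Icc a b := ⟨hx.1.le, hx.2.le⟩
    have hsx := hsin x hx'
    have hhalf : HasDerivAt (fun θ : ℝ => θ/2) (1/2) x := by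
      simpa using (hasDerivAt_id x).div_const 2
    have hcos : HasDerivAt (fun θ : ℝ => Real.cos (θ/2)) (-Real.sin (x/2) * (1/2)) x :=
      by have := (Real.hasDerivAt_cos (x/2)).comp x hhalf; exact this
    have hsinD : HasDerivAt (fun θ : ℝ => Real.sin (θ/2)) (Real.cos (x/2) * (1/2)) x :=
      by have := (Real.hasDerivAt_sin (x/2)).comp x hhalf; exact this
    have hwD : HasDerivAt w (-(1/8) * (1/Real.sin (x/2)^2)) x := by
      have hdiv := hcos.div hsinD hsx.ne'
      have := hdiv.const_mul (1/4 : ℝ)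
      refine this.congr_deriv ?_
      have hs1 := Real.sin_sq_add_cos_sq (x/2)
      field_simp
      nlinarith [hs1]
    have hgD : HasDerivAt g (g' x) x := hderiv x (hIab hx')
    have hg2D : HasDerivAt (fun θ => g θ ^ 2) ((2:ℕ) * g x ^ 1 * g' x) x := hgD.pow 2
    have := hwD.mul hg2D
    refine this.congr_deriv ?_
    simp only [hh', Nat.cast_ofNat]
  -- continuity of h on Icc a b
  have hcont : ContinuousOn h (Icc a b) := by
    apply ContinuousOn.mul
    · apply ContinuousOn.mul continuousOn_const
      apply ContinuousOn.div
      · exact (Real.continuous_cos.comp (continuous_id.div_const 2)).continuousOn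
      · exact (Real.continuous_sin.comp (continuous_id.div_const 2)).continuousOn
      · intro θ hθ; exact (hsin θ hθ).ne'
    · exact ((hg.mono (fun θ hθ => (Ioo_subset_Icc_self (hIab hθ))))).pow 2
  -- integrabilities on [a,b]
  have hsub : uIcc a b ⊆ uIcc 0 (2*π) := by
    rw [uIcc_of_le hab, uIcc_of_le (by linarith : (0:ℝ) ≤ 2*π)]
    exact fun θ hθ => ⟨by linarith [hθ.1], by linarith [hθ.2]⟩
  have i1 : IntervalIntegrable (fun θ => g' θ^2) volume a b := hg'2.mono_set hsub
  have i2 : IntervalIntegrable (fun θ => (1/8 + (1/16)*Real.cot (θ/2)^2) * g θ^2) volume a b :=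
    hFg2.mono_set hsub
  -- continuity of wg on Icc a b
  have hwgcont : ContinuousOn (fun θ => w θ * g θ) (Icc a b) := by
    apply ContinuousOn.mul
    · apply ContinuousOn.mul continuousOn_const
      apply ContinuousOn.div
      · exact (Real.continuous_cos.comp (continuous_id.div_const 2)).continuousOn
      · exact (Real.continuous_sin.comp (continuous_id.div_const 2)).continuousOn
      · intro θ hθ; exact (hsin θ hθ).ne'
    · exact hg.mono (fun θ hθ => Ioo_subset_Icc_self (hIab hθ))
  have i3a : IntervalIntegrable (fun θ => (-(1/8) * (1/Real.sin (θ/2)^2)) * g θ ^ 2) volume a b := by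
    apply ContinuousOn.intervalIntegrable
    rw [uIcc_of_le hab]
    apply ContinuousOn.mul
    · apply ContinuousOn.mul continuousOn_const
      apply ContinuousOn.div continuousOn_const
      · exact ((Real.continuous_sin.comp (continuous_id.div_const 2)).continuousOn).pow 2
      · intro θ hθ; exact pow_ne_zero 2 (hsin θ hθ).ne' 
    · exact ((hg.mono (fun θ hθ => Ioo_subset_Icc_self (hIab hθ)))).pow 2
  have imaj : IntervalIntegrable (fun θ => (w θ * g θ)^2 + g' θ^2) volume a b := by
    have hc2 : ContinuousOn (fun θ => (w θ * g θ)^2) (uIcc a b) := by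
      rw [uIcc_of_le hab]; exact hwgcont.pow 2
    exact hc2.intervalIntegrable.add i1
  have i3b : IntervalIntegrable (fun θ => w θ * (2 * g θ ^ 1 * g' θ)) volume a b := by
    have heq : (fun θ => w θ * (2 * g θ ^ 1 * g' θ)) = fun θ => (2 * (w θ * g θ)) * g' θ := by
      funext θ; ring
    rw [heq, intervalIntegrable_iff_integrableOn_Ioc_of_le hab] at *
    apply imaj.mono'
    · refine AEStronglyMeasurable.mul ?_ hg'm
      exact (continuousOn_const.mul (hwgcont.mono Ioc_subset_Icc_self)).aestronglyMeasurable
        measurableSet_Ioc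
    · apply ae_of_all
      intro θ
      rw [Real.norm_eq_abs]
      have h1 : |2 * (w θ * g θ) * g' θ| = 2 * |w θ * g θ| * |g' θ| := by
        rw [abs_mul, abs_mul, abs_two]
      rw [h1]
      nlinarith [sq_nonneg (|w θ * g θ| - |g' θ|), sq_abs (w θ * g θ), sq_abs (g' θ)]
  have i3 : IntervalIntegrable h' volume a b := by
    rw [hh']; exact i3a.add i3b
  -- FTC
  have ftc : ∫ θ in a..b, h' θ = h b - h a :=
    intervalIntegral.integral_eq_sub_of_hasDerivAt_of_le hab hcont hd i3
  -- key identity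
  have key : (∫ θ in a..b, (g' θ - w θ * g θ)^2)
      = (∫ θ in a..b, g' θ^2) - (∫ θ in a..b, (1/8 + (1/16)*Real.cot (θ/2)^2) * g θ^2)
        - (∫ θ in a..b, h' θ) := by
    rw [← intervalIntegral.integral_sub i1 i2, ← intervalIntegral.integral_sub (i1.sub i2) i3]
    apply intervalIntegral.integral_congr
    intro θ hθ
    rw [uIcc_of_le hab] at hθ
    have hs := hsin θ hθ
    have hpyth := Real.sin_sq_add_cos_sq (θ/2)
    have hinv : 1 / Real.sin (θ/2)^2 = 1 + (Real.cos (θ/2)/Real.sin (θ/2))^2 := by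
      field_simp
      linarith [hpyth]
    simp only [hh', hw, Real.cot_eq_cos_div_sin]
    rw [hinv]
    ring
  have hnn : (0:ℝ) ≤ ∫ θ in a..b, (g' θ - w θ * g θ)^2 :=
    intervalIntegral.integral_nonneg hab (fun u _ => sq_nonneg _)
  have hha : h a = (1/4)*Real.cot (a/2)*(g a)^2 := by
    simp only [hh, hw, Real.cot_eq_cos_div_sin]
  have hhb : h b = (1/4)*Real.cot (b/2)*(g b)^2 := by
    simp only [hh, hw, Real.cot_eq_cos_div_sin]
  rw [ftc, hha, hhb] at key
  linarith [hnn, key.ge]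

/-- Hardy-type form bound: for every `α > 8/9` there is `B` such that every
`g ∈ W^{1,2}(0,2π)` with `g(0) = g(2π) = 0` satisfies
`∫ V g² ≤ α ∫ (g')² + B ∫ g²`, where `V θ = 1/12 + (1/18) cot²(θ/2)`. -/
theorem hardy_form_bound :
    ∀ α : ℝ, 8/9 < α → ∃ B : ℝ,
      ∀ g g' : ℝ → ℝ,
        ContinuousOn g (Icc 0 (2 * π)) →
        (∀ θ ∈ Ioo 0 (2 * π), HasDerivAt g (g' θ) θ) →
        g 0 = 0 → g (2 * π) = 0 →
        IntervalIntegrable (fun θ => (g' θ) ^ 2) volume 0 (2 * π) →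
        IntervalIntegrable
          (fun θ => (1/12 + (1/18) * Real.cot (θ/2) ^ 2) * (g θ) ^ 2)
          volume 0 (2 * π) →
        (∫ θ in (0:ℝ)..(2 * π),
            (1/12 + (1/18) * Real.cot (θ/2) ^ 2) * (g θ) ^ 2)
          ≤ α * (∫ θ in (0:ℝ)..(2 * π), (g' θ) ^ 2)
            + B * (∫ θ in (0:ℝ)..(2 * π), (g θ) ^ 2) := by
  intro α hα
  refine ⟨0, ?_⟩
  intro g g' hg hderiv h0 hTT hg'2 hVg2
  have hπ : (0:ℝ) < π := Real.pi_pos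
  have hT0 : (0:ℝ) ≤ 2*π := by linarith
  -- measurability of g'
  have hg'm : AEStronglyMeasurable g' (volume.restrict (Set.Ioc 0 (2*π))) := by
    have h1 : AEStronglyMeasurable (deriv g) (volume.restrict (Set.Ioc 0 (2*π))) :=
      (measurable_deriv g).aestronglyMeasurable
    apply h1.congr
    have h2 : ∀ᵐ θ ∂(volume.restrict (Set.Ioc 0 (2*π))), θ ∈ Set.Ioo 0 (2*π) := by
      rw [← Measure.restrict_congr_set Ioo_ae_eq_Ioc]
      exact ae_restrict_mem measurableSet_Ioo
    filter_upwards [h2] with θ hθ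
    exact (hderiv θ hθ).deriv
  have hg'mab : ∀ u v : ℝ, 0 ≤ u → v ≤ 2*π →
      AEStronglyMeasurable g' (volume.restrict (Set.Ioc u v)) := by
    intro u v hu hv
    exact hg'm.mono_measure (Measure.restrict_mono (Set.Ioc_subset_Ioc hu hv) le_rfl)
  have hsubst : ∀ u v : ℝ, 0 ≤ u → v ≤ 2*π → u ≤ v → uIcc u v ⊆ uIcc 0 (2*π) := by
    intro u v hu hv huv
    rw [uIcc_of_le huv, uIcc_of_le hT0]
    exact Icc_subset_Icc hu hv
  -- interval integrability of g' on subintervals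
  have hg'int : ∀ u v : ℝ, 0 ≤ u → v ≤ 2*π → u ≤ v → IntervalIntegrable g' volume u v := by
    intro u v hu hv huv
    have hmaj : IntervalIntegrable (fun θ => (1 + g' θ^2)/2) volume u v :=
      (intervalIntegrable_const.add (hg'2.mono_set (hsubst u v hu hv huv))).div_const 2
    rw [intervalIntegrable_iff_integrableOn_Ioc_of_le huv] at hmaj ⊢
    apply hmaj.mono' (hg'mab u v hu hv)
    apply ae_of_all
    intro θ
    rw [Real.norm_eq_abs]
    nlinarith [sq_nonneg (|g' θ| - 1), sq_abs (g' θ), abs_nonneg (g' θ)]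
  -- g² integrable
  have hgc : ContinuousOn (fun θ => g θ^2) (uIcc 0 (2*π)) := by
    rw [uIcc_of_le hT0]; exact hg.pow 2
  have hg2int : IntervalIntegrable (fun θ => g θ^2) volume 0 (2*π) := hgc.intervalIntegrable
  -- F g² integrable
  have hFg2 : IntervalIntegrable
      (fun θ => (1/8 + (1/16)*Real.cot (θ/2)^2) * g θ^2) volume 0 (2*π) := by
    have heq : (fun θ => (1/8 + (1/16)*Real.cot (θ/2)^2) * g θ^2)
        = fun θ => (9/8)*((1/12 + (1/18) * Real.cot (θ/2) ^ 2) * (g θ) ^ 2) + (1/32)*(g θ^2) := by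
      funext θ; ring
    rw [heq]
    exact (hVg2.const_mul _).add (hg2int.const_mul _)
  -- pointwise square bounds via FTC
  have hgx_left : ∀ x ∈ Icc 0 (2*π), g x ^2 ≤ x * ∫ t in (0:ℝ)..x, g' t^2 := by
    intro x hx
    have hftc : ∫ t in (0:ℝ)..x, g' t = g x - g 0 :=
      intervalIntegral.integral_eq_sub_of_hasDerivAt_of_le hx.1
        (hg.mono (Icc_subset_Icc le_rfl hx.2))
        (fun t ht => hderiv t ⟨ht.1, lt_of_lt_of_le ht.2 hx.2⟩)
        (hg'int 0 x le_rfl hx.2 hx.1)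
    have hcs := sq_integral_le hx.1 (hg'int 0 x le_rfl hx.2 hx.1)
      (hg'2.mono_set (hsubst 0 x le_rfl hx.2 hx.1))
    rw [hftc, h0, sub_zero] at hcs
    simpa using hcs
  have hgx_right : ∀ x ∈ Icc 0 (2*π), g x ^2 ≤ (2*π - x) * ∫ t in x..(2*π), g' t^2 := by
    intro x hx
    have hftc : ∫ t in x..(2*π), g' t = g (2*π) - g x :=
      intervalIntegral.integral_eq_sub_of_hasDerivAt_of_le hx.2
        (hg.mono (Icc_subset_Icc hx.1 le_rfl))
        (fun t ht => hderiv t ⟨lt_of_le_of_lt hx.1 ht.1, ht.2⟩)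
        (hg'int x (2*π) hx.1 le_rfl hx.2)
    have hcs := sq_integral_le hx.2 (hg'int x (2*π) hx.1 le_rfl hx.2)
      (hg'2.mono_set (hsubst x (2*π) hx.1 le_rfl hx.2))
    rw [hftc, hTT, zero_sub, neg_sq] at hcs
    exact hcs
  set K := ∫ θ in (0:ℝ)..(2*π), g' θ^2 with hK
  have hK0 : 0 ≤ K := intervalIntegral.integral_nonneg hT0 (fun u _ => sq_nonneg _)
  set Φ : ℝ → ℝ := fun x => ∫ θ in (0:ℝ)..x, (1/8 + (1/16)*Real.cot (θ/2)^2) * g θ^2 with hΦ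
  have hΦcont : ContinuousOn Φ (Icc 0 (2*π)) := by
    have := intervalIntegral.continuousOn_primitive_interval' hFg2 left_mem_uIcc
    rwa [uIcc_of_le hT0] at this
  -- main estimate
  have main : ∀ a1 ∈ Set.Ioo 0 π, ∀ b1 ∈ Set.Ioo π (2*π), Φ b1 - Φ a1 ≤ K := by
    intro a1 ha1 b1 hb1
    have hab : a1 ≤ b1 := le_trans ha1.2.le hb1.1.le
    have ha1T : a1 ≤ 2*π := by linarith [ha1.2]
    have hb10 : 0 ≤ b1 := by linarith [hb1.1]
    have step := interval_step g g' a1 b1 ha1.1 hb1.2 hab hg hderiv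
      (hg'mab a1 b1 ha1.1.le (by linarith [hb1.2])) hg'2 hFg2
    -- left boundary
    have hbl : (1/4)*Real.cot (a1/2)*(g a1)^2 ≤ (1/2) * ∫ t in (0:ℝ)..a1, g' t^2 := by
      have hga := hgx_left a1 ⟨ha1.1.le, ha1T⟩
      have hcot : Real.cot (a1/2) ≤ 2/a1 := by
        have h := cot_le_inv (by linarith [ha1.1] : 0 < a1/2) (by linarith [ha1.2] : a1/2 < π/2)
        rw [show 1/(a1/2) = 2/a1 by field_simp] at h
        exact h
      have hane : a1 ≠ 0 := ne_of_gt ha1.1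
      calc (1/4)*Real.cot (a1/2)*(g a1)^2
          ≤ (1/4)*(2/a1)*(g a1)^2 :=
            mul_le_mul_of_nonneg_right
              (mul_le_mul_of_nonneg_left hcot (by norm_num)) (sq_nonneg _)
        _ = (1/(2*a1)) * (g a1)^2 := by field_simp; ring
        _ ≤ (1/(2*a1)) * (a1 * ∫ t in (0:ℝ)..a1, g' t^2) := by
            apply mul_le_mul_of_nonneg_left hga
            have : 0 < a1 := ha1.1
            positivity
        _ = (1/2) * ∫ t in (0:ℝ)..a1, g' t^2 := by
            field_simp
    -- right boundary
    have hbr : -((1/4)*Real.cot (b1/2)*(g b1)^2) ≤ (1/2) * ∫ t in b1..(2*π), g' t^2 := by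
      have hgb := hgx_right b1 ⟨hb10, hb1.2.le⟩
      have hcot : -Real.cot (b1/2) ≤ 2/(2*π - b1) := by
        have hrw : Real.cot (b1/2) = - Real.cot ((2*π - b1)/2) := by
          rw [show (2*π - b1)/2 = π - b1/2 by ring, cot_pi_sub]
          ring
        have h := cot_le_inv (by linarith [hb1.2] : 0 < (2*π - b1)/2)
          (by linarith [hb1.1] : (2*π - b1)/2 < π/2)
        rw [show 1/((2*π - b1)/2) = 2/(2*π - b1) by field_simp] at h
        rw [hrw]; linarith
      have hb1lt : 0 < 2*π - b1 := by linarith [hb1.2]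
      have hbne : 2*π - b1 ≠ 0 := ne_of_gt hb1lt
      calc -((1/4)*Real.cot (b1/2)*(g b1)^2)
          = (1/4)*(-Real.cot (b1/2))*(g b1)^2 := by ring
        _ ≤ (1/4)*(2/(2*π - b1))*(g b1)^2 :=
            mul_le_mul_of_nonneg_right
              (mul_le_mul_of_nonneg_left hcot (by norm_num)) (sq_nonneg _)
        _ = (1/(2*(2*π - b1))) * (g b1)^2 := by field_simp; ring
        _ ≤ (1/(2*(2*π - b1))) * ((2*π - b1) * ∫ t in b1..(2*π), g' t^2) := by
            apply mul_le_mul_of_nonneg_left hgb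
            positivity
        _ = (1/2) * ∫ t in b1..(2*π), g' t^2 := by
            field_simp
    -- splitting K
    have hsplit1 : (∫ t in (0:ℝ)..a1, g' t^2) + (∫ t in a1..b1, g' t^2)
        = ∫ t in (0:ℝ)..b1, g' t^2 :=
      intervalIntegral.integral_add_adjacent_intervals
        (hg'2.mono_set (hsubst 0 a1 le_rfl ha1T ha1.1.le))
        (hg'2.mono_set (hsubst a1 b1 ha1.1.le hb1.2.le hab))
    have hsplit2 : (∫ t in (0:ℝ)..b1, g' t^2) + (∫ t in b1..(2*π), g' t^2) = K :=
      intervalIntegral.integral_add_adjacent_intervals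
        (hg'2.mono_set (hsubst 0 b1 le_rfl hb1.2.le hb10))
        (hg'2.mono_set (hsubst b1 (2*π) hb10 le_rfl hb1.2.le))
    have hnn1 : (0:ℝ) ≤ ∫ t in (0:ℝ)..a1, g' t^2 :=
      intervalIntegral.integral_nonneg ha1.1.le (fun u _ => sq_nonneg _)
    have hnn3 : (0:ℝ) ≤ ∫ t in b1..(2*π), g' t^2 :=
      intervalIntegral.integral_nonneg hb1.2.le (fun u _ => sq_nonneg _)
    -- Φ difference
    have hΦd : Φ a1 + (∫ θ in a1..b1, (1/8 + (1/16)*Real.cot (θ/2)^2) * g θ^2) = Φ b1 :=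
      intervalIntegral.integral_add_adjacent_intervals
        (hFg2.mono_set (hsubst 0 a1 le_rfl ha1T ha1.1.le))
        (hFg2.mono_set (hsubst a1 b1 ha1.1.le hb1.2.le hab))
    linarith [step, hbl, hbr, hsplit1, hsplit2, hnn1, hnn3, hΦd]
  -- limit a → 0⁺
  have claim1 : ∀ b1 ∈ Set.Ioo π (2*π), Φ b1 ≤ K := by
    intro b1 hb1
    have hne : (𝓝[Set.Ioo (0:ℝ) π] 0).NeBot := left_nhdsWithin_Ioo_neBot hπ
    have htd : Filter.Tendsto (fun a1 => K + Φ a1) (𝓝[Set.Ioo (0:ℝ) π] 0) (𝓝 (K + Φ 0)) := by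
      apply Filter.Tendsto.const_add
      exact ((hΦcont 0 ⟨le_rfl, hT0⟩).mono_left
        (nhdsWithin_mono 0 (fun x hx => ⟨hx.1.le, by linarith [hx.2]⟩)))
    have hΦ0 : Φ 0 = 0 := intervalIntegral.integral_same
    rw [hΦ0, add_zero] at htd
    apply ge_of_tendsto htd
    filter_upwards [self_mem_nhdsWithin] with a1 ha1
    linarith [main a1 ha1 b1 hb1]
  -- limit b → 2π⁻
  have claim2 : Φ (2*π) ≤ K := by
    have hne : (𝓝[Set.Ioo π (2*π)] (2*π)).NeBot := right_nhdsWithin_Ioo_neBot (by linarith)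
    have htd : Filter.Tendsto Φ (𝓝[Set.Ioo π (2*π)] (2*π)) (𝓝 (Φ (2*π))) :=
      (hΦcont (2*π) ⟨hT0, le_rfl⟩).mono_left
        (nhdsWithin_mono _ (fun x hx => ⟨by linarith [hx.1], hx.2.le⟩))
    apply le_of_tendsto htd
    filter_upwards [self_mem_nhdsWithin] with b1 hb1
    exact claim1 b1 hb1
  -- conclusion
  have hg2nn : (0:ℝ) ≤ ∫ θ in (0:ℝ)..(2*π), g θ^2 :=
    intervalIntegral.integral_nonneg hT0 (fun u _ => sq_nonneg _)
  have hdecomp : (∫ θ in (0:ℝ)..(2 * π), (1/12 + (1/18) * Real.cot (θ/2) ^ 2) * (g θ) ^ 2)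
      = (8/9) * Φ (2*π) - (1/36) * ∫ θ in (0:ℝ)..(2*π), g θ^2 := by
    rw [hΦ]
    rw [← intervalIntegral.integral_const_mul, ← intervalIntegral.integral_const_mul,
      ← intervalIntegral.integral_sub ((hFg2.const_mul _)) ((hg2int.const_mul _))]
    apply intervalIntegral.integral_congr
    intro θ _
    ring
  rw [hdecomp]
  have h89 : (8/9) * Φ (2*π) ≤ (8/9) * K := by
    apply mul_le_mul_of_nonneg_left claim2 (by norm_num)
  have hαK : (8/9) * K ≤ α * K := mul_le_mul_of_nonneg_right hα.le hK0
  linarith [hg2nn]
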